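/- Let R = ℤ localized at the prime ideal (2), i.e., the subring {a/b ∈ ℚ : b odd} of ℚ. Every torsion class in the category of finitely generated R-modules is one of exactly three classes: the zero class {0}, the class of all finitely generated R-modules, and the class of finitely generated torsion R-modules (finitely generated modules with nonzero annihilator). -/

import Mathlib

/-- A torsion class in the category of finitely generated `R`-modules: a class of
finitely generated modules closed under isomorphisms, finite direct sums, quotients and
extensions. -/
def IsFGTorsionClass (R : Type) [Ring R] (U : Set (ModuleCat.{0} R)) : Prop :=
  (∀ M ∈ U, Module.Finite R M) ∧
  (∀ M N : ModuleCat.{0} R, Nonempty ((M : Type) ≃ₗ[R] (N : Type)) → M ∈ U → N ∈ U) ∧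
  (∀ (n : ℕ) (F : Fin n → ModuleCat.{0} R), (∀ i, F i ∈ U) →
      ModuleCat.of R (DirectSum (Fin n) (fun i => (F i : Type))) ∈ U) ∧
  (∀ M N : ModuleCat.{0} R, M ∈ U →
      (∃ p : (M : Type) →ₗ[R] (N : Type), Function.Surjective p) → N ∈ U) ∧
  (∀ A B C : ModuleCat.{0} R, A ∈ U → C ∈ U →
      (∃ (f : (A : Type) →ₗ[R] (B : Type)) (g : (B : Type) →ₗ[R] (C : Type)),
        Function.Injective f ∧ Function.Surjective g ∧ LinearMap.range f = LinearMap.ker g) →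
      B ∈ U)

namespace FGTCAux

set_option linter.unusedSectionVars false


section RingFacts

variable {R : Subring ℚ}

theorem coe_two : ((2 : ↥R) : ℚ) = 2 := rfl

theorem r_two_ne_zero : (2 : ↥R) ≠ 0 := by
  intro h
  have := congrArg (Subtype.val) h
  rw [coe_two] at this
  norm_num at this

variable (hR : ∀ x : ℚ, x ∈ R ↔ ∃ a b : ℤ, Odd b ∧ x = (a : ℚ) / (b : ℚ))

include hR

theorem half_not_mem : (1/2 : ℚ) ∉ R := by
  intro h
  obtain ⟨a, b, hb, hab⟩ := (hR _).mp h
  have hb0 : (b : ℚ) ≠ 0 := Int.cast_ne_zero.mpr (by rintro rfl; exact absurd hb (by decide))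
  have : (b : ℚ) = 2 * a := by field_simp at hab; linarith
  have : b = 2 * a := by exact_mod_cast this
  exact (Int.not_odd_iff_even.mpr ⟨a, by omega⟩) hb

theorem odd_frac_mem {a b : ℤ} (hb : Odd b) : ((a : ℚ) / (b : ℚ)) ∈ R :=
  (hR _).mpr ⟨a, b, hb, rfl⟩

/-- every nonzero element of R is associated to a power of 2 -/
theorem assoc_pow_two {u : ↥R} (hu : u ≠ 0) : ∃ n : ℕ, Associated ((2 : ↥R) ^ n) u := by
  obtain ⟨a, b, hb, hab⟩ := (hR _).mp u.2
  have hb0 : (b : ℚ) ≠ 0 := Int.cast_ne_zero.mpr (by rintro rfl; exact absurd hb (by decide))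
  have ha0 : a ≠ 0 := by
    rintro rfl
    apply hu
    ext
    simpa using hab
  have hfin : FiniteMultiplicity (2 : ℤ) a := Int.finiteMultiplicity_iff.mpr ⟨by decide, ha0⟩
  obtain ⟨c, hc, hc2⟩ := hfin.exists_eq_pow_mul_and_not_dvd
  set n := multiplicity (2:ℤ) a
  have hcodd : Odd c := Int.not_even_iff_odd.mp (fun h => hc2 h.two_dvd)
  have hc0 : (c : ℚ) ≠ 0 := Int.cast_ne_zero.mpr (by rintro rfl; exact absurd hcodd (by decide))
  refine ⟨n, ?_⟩
  have hv : ((c : ℚ)/(b:ℚ)) ∈ R := odd_frac_mem hR hb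
  have hw : ((b : ℚ)/(c:ℚ)) ∈ R := odd_frac_mem hR hcodd
  have hunit : IsUnit (⟨_, hv⟩ : ↥R) := by
    refine IsUnit.of_mul_eq_one ⟨_, hw⟩ ?_
    ext
    push_cast
    field_simp
  obtain ⟨w, hw⟩ := hunit
  refine ⟨w, ?_⟩
  ext
  rw [hw]
  push_cast [coe_two]
  rw [hab, hc]
  push_cast
  field_simp

theorem two_irreducible : Irreducible (2 : ↥R) := by
  constructor
  · intro h
    obtain ⟨v, hv⟩ := h.exists_right_inv
    apply half_not_mem hR
    have hv' : (2:ℚ) * (v : ℚ) = 1 := by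
      have := congrArg (Subtype.val) hv
      push_cast [coe_two] at this
      exact this
    have : (v : ℚ) = 1/2 := by field_simp at hv' ⊢; linarith
    exact this ▸ v.2
  · intro x y hxy
    have hx0 : x ≠ 0 := by rintro rfl; rw [zero_mul] at hxy; exact r_two_ne_zero hxy
    have hy0 : y ≠ 0 := by rintro rfl; rw [mul_zero] at hxy; exact r_two_ne_zero hxy
    obtain ⟨m, u, hu⟩ := assoc_pow_two hR hx0
    obtain ⟨n, v, hv⟩ := assoc_pow_two hR hy0
    rcases Nat.eq_zero_or_pos m with hm | hm
    · left
      subst hm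
      rw [pow_zero, one_mul] at hu
      exact hu ▸ u.isUnit
    rcases Nat.eq_zero_or_pos n with hn | hn
    · right
      subst hn
      rw [pow_zero, one_mul] at hv
      exact hv ▸ v.isUnit
    exfalso
    obtain ⟨k, hk⟩ : ∃ k, m + n = k + 2 := ⟨m + n - 2, by omega⟩
    have key : (2 : ↥R) = 2 ^ (k+2) * (↑u * ↑v) := by
      rw [← hu, ← hv, mul_mul_mul_comm, ← pow_add, hk] at hxy
      exact hxy
    have keyQ : (2 : ℚ) = 2 ^ (k+2) * (((↑u : ↥R) : ℚ) * ((↑v : ↥R) : ℚ)) := by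
      have := congrArg (Subtype.val) key
      push_cast [coe_two] at this
      linear_combination this
    set U : ℚ := (((↑u : ↥R) : ℚ) * ((↑v : ↥R) : ℚ)) with hU
    have h2k : (2:ℚ)^(k+2) ≠ 0 := by positivity
    apply half_not_mem hR
    have hmem : U * (2:ℚ)^k ∈ R := by
      apply R.mul_mem (R.mul_mem (↑u : ↥R).2 (↑v : ↥R).2)
      have : ((2:↥R)^k : ℚ) = (2:ℚ)^k := by push_cast [coe_two]; ring
      exact this ▸ ((2:↥R)^k).2
    have hUval : U = 2 / 2^(k+2) := by
      rw [eq_div_iff h2k]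
      linear_combination -keyQ
    have : (1/2 : ℚ) = U * (2:ℚ)^k := by
      rw [hUval, pow_add]
      field_simp
    rw [this]
    exact hmem

theorem dvr : IsDiscreteValuationRing ↥R :=
  IsDiscreteValuationRing.ofHasUnitMulPowIrreducibleFactorization
    ⟨2, two_irreducible hR, fun hx => assoc_pow_two hR hx⟩

end RingFacts

section Abstract

open Submodule

variable {A : Type} [CommRing A]

/-- a linear equivalence between two subsingleton modules -/
def subsingletonLEquiv (M N : Type) [AddCommGroup M] [Module A M] [AddCommGroup N]
    [Module A N] [Subsingleton M] [Subsingleton N] : M ≃ₗ[A] N where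
  toFun _ := 0
  invFun _ := 0
  map_add' _ _ := Subsingleton.elim _ _
  map_smul' _ _ := Subsingleton.elim _ _
  left_inv _ := Subsingleton.elim _ _
  right_inv _ := Subsingleton.elim _ _

theorem zero_mem_tc {U : Set (ModuleCat.{0} A)} (hU : IsFGTorsionClass A U)
    {M : ModuleCat.{0} A} (hM : ∀ x : M, x = 0) : M ∈ U := by
  obtain ⟨-, hiso, hsum, -, -⟩ := hU
  have h0 := hsum 0 Fin.elim0 (fun i => i.elim0)
  haveI : Subsingleton (M : Type) := subsingleton_of_forall_eq 0 hM
  exact hiso _ M ⟨subsingletonLEquiv _ _⟩ h0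

theorem finite_of_ext {MA MB MC : Type} [AddCommGroup MA] [Module A MA] [AddCommGroup MB]
    [Module A MB] [AddCommGroup MC] [Module A MC] [Module.Finite A MA] [Module.Finite A MC]
    (f : MA →ₗ[A] MB) (g : MB →ₗ[A] MC) (hg : Function.Surjective g)
    (hfg : LinearMap.range f = LinearMap.ker g) : Module.Finite A MB := by
  rw [Module.finite_def]
  apply Submodule.fg_of_fg_map_of_fg_inf_ker g
  · rw [Submodule.map_top, LinearMap.range_eq_top.mpr hg]
    exact Module.finite_def.mp ‹_›
  · rw [top_inf_eq, ← hfg, LinearMap.range_eq_map]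
    exact (Module.finite_def.mp ‹_›).map f

theorem tc_zero : IsFGTorsionClass A {M : ModuleCat.{0} A | ∀ x : M, x = 0} := by
  refine ⟨?_, ?_, ?_, ?_, ?_⟩
  · intro M hM
    haveI : Subsingleton (M : Type) := subsingleton_of_forall_eq 0 hM
    exact Module.Finite.of_surjective (0 : A →ₗ[A] M)
      (fun y => ⟨0, Subsingleton.elim _ _⟩)
  · intro M N ⟨e⟩ hM x
    rw [← e.apply_symm_apply x, hM (e.symm x), map_zero]
  · intro n F hF x
    exact DFinsupp.ext fun i => hF i _
  · intro M N hM ⟨p, hp⟩ x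
    obtain ⟨y, rfl⟩ := hp x
    rw [hM y, map_zero]
  · intro P B C hP hC ⟨f, g, hf, hg, hfg⟩ x
    have h1 : x ∈ LinearMap.ker g := by rw [LinearMap.mem_ker]; exact hC (g x)
    rw [← hfg] at h1
    obtain ⟨a, rfl⟩ := h1
    rw [hP a, map_zero]

theorem tc_all : IsFGTorsionClass A {M : ModuleCat.{0} A | Module.Finite A M} := by
  refine ⟨fun M hM => hM, ?_, ?_, ?_, ?_⟩
  · intro M N ⟨e⟩ hM
    haveI : Module.Finite A (M : Type) := hM
    exact Module.Finite.equiv e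
  · intro n F hF
    have : ∀ i, Module.Finite A (F i : Type) := hF
    exact Module.Finite.equiv (DirectSum.linearEquivFunOnFintype A (Fin n)
      (fun i => (F i : Type))).symm
  · intro M N hM ⟨p, hp⟩
    have : Module.Finite A (M : Type) := hM
    exact Module.Finite.of_surjective p hp
  · intro P B C hP hC ⟨f, g, hf, hg, hfg⟩
    have : Module.Finite A (P : Type) := hP
    have : Module.Finite A (C : Type) := hC
    exact finite_of_ext f g hg hfg

theorem tc_torsion [IsDomain A] :
    IsFGTorsionClass A {M : ModuleCat.{0} A |
      Module.Finite A M ∧ ∀ x : M, ∃ r : A, r ≠ 0 ∧ r • x = 0} := by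
  refine ⟨fun M hM => hM.1, ?_, ?_, ?_, ?_⟩
  · intro M N ⟨e⟩ hM
    haveI : Module.Finite A (M : Type) := hM.1
    refine ⟨Module.Finite.equiv e, fun x => ?_⟩
    obtain ⟨r, hr, h⟩ := hM.2 (e.symm x)
    exact ⟨r, hr, by rw [← e.apply_symm_apply x, ← map_smul, h, map_zero]⟩
  · intro n F hF
    haveI : ∀ i, Module.Finite A (F i : Type) := fun i => (hF i).1
    refine ⟨Module.Finite.equiv (DirectSum.linearEquivFunOnFintype A (Fin n)
      (fun i => (F i : Type))).symm, fun x => ?_⟩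
    induction x using DirectSum.induction_on with
    | zero => exact ⟨1, one_ne_zero, smul_zero 1⟩
    | of i m =>
      obtain ⟨r, hr, h⟩ := (hF i).2 m
      refine ⟨r, hr, ?_⟩
      rw [← DirectSum.lof_eq_of A,
        ← (DirectSum.lof A (Fin n) (fun i => (F i : Type)) i).map_smul r m, h, map_zero]
    | add x y hx hy =>
      obtain ⟨r, hr, h⟩ := hx
      obtain ⟨s, hs, h'⟩ := hy
      refine ⟨r * s, mul_ne_zero hr hs, ?_⟩
      have hx0 : (r * s) • x = 0 := by rw [mul_comm, mul_smul, h, smul_zero]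
      have hy0 : (r * s) • y = 0 := by rw [mul_smul, h', smul_zero]
      rw [smul_add, hx0, hy0, add_zero]
  · intro M N hM ⟨p, hp⟩
    haveI : Module.Finite A (M : Type) := hM.1
    refine ⟨Module.Finite.of_surjective p hp, fun x => ?_⟩
    obtain ⟨y, rfl⟩ := hp x
    obtain ⟨r, hr, h⟩ := hM.2 y
    exact ⟨r, hr, by rw [← map_smul, h, map_zero]⟩
  · intro P B C hP hC ⟨f, g, hf, hg, hfg⟩
    haveI : Module.Finite A (P : Type) := hP.1
    haveI : Module.Finite A (C : Type) := hC.1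
    refine ⟨finite_of_ext f g hg hfg, fun x => ?_⟩
    obtain ⟨r, hr, h⟩ := hC.2 (g x)
    have : r • x ∈ LinearMap.ker g := by rw [LinearMap.mem_ker, map_smul, h]
    rw [← hfg] at this
    obtain ⟨a, ha⟩ := this
    obtain ⟨s, hs, h'⟩ := hP.2 a
    refine ⟨s * r, mul_ne_zero hs hr, ?_⟩
    rw [mul_smul, ← ha, ← map_smul, h', map_zero]

end Abstract


section Classify

open Submodule

variable {A : Type} [CommRing A] [IsDomain A] [IsDiscreteValuationRing A]

/-- the standard short exact sequence `A/π^k → A/π^(k+1) → A/π`. -/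
theorem pow_succ_exact (π : A) (hπ : Irreducible π) (k : ℕ) :
    ∃ (f : (A ⧸ Ideal.span {π ^ k}) →ₗ[A] (A ⧸ Ideal.span {π ^ (k+1)}))
      (g : (A ⧸ Ideal.span {π ^ (k+1)}) →ₗ[A] (A ⧸ Ideal.span {π})),
      Function.Injective f ∧ Function.Surjective g ∧ LinearMap.range f = LinearMap.ker g := by
  have hle1 : Ideal.span {π ^ k} ≤
      Submodule.comap (LinearMap.lsmul A A π) (Ideal.span {π ^ (k+1)}) := by
    rw [Ideal.span_le]
    rintro y ⟨⟩
    simp only [SetLike.mem_coe, Submodule.mem_comap, LinearMap.lsmul_apply, smul_eq_mul]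
    exact Ideal.mem_span_singleton.mpr ⟨1, by ring⟩
  have hle2 : Ideal.span {π ^ (k+1)} ≤
      Submodule.comap (LinearMap.id : A →ₗ[A] A) (Ideal.span {π}) := by
    rw [Ideal.span_le]
    rintro y ⟨⟩
    simp only [SetLike.mem_coe, Submodule.mem_comap, LinearMap.id_coe, id_eq]
    exact Ideal.mem_span_singleton.mpr (dvd_pow_self π (Nat.succ_ne_zero k))
  refine ⟨Submodule.mapQ _ _ _ hle1, Submodule.mapQ _ _ _ hle2, ?_, ?_, ?_⟩
  · rw [← LinearMap.ker_eq_bot, eq_bot_iff]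
    intro z hz
    rw [LinearMap.mem_ker] at hz
    obtain ⟨y, rfl⟩ := Submodule.Quotient.mk_surjective _ z
    rw [Submodule.mapQ_apply, Submodule.Quotient.mk_eq_zero] at hz
    simp only [LinearMap.lsmul_apply, smul_eq_mul] at hz
    rw [Ideal.mem_span_singleton] at hz
    obtain ⟨c, hc⟩ := hz
    have hy : y = π ^ k * c := by
      apply mul_left_cancel₀ hπ.ne_zero
      rw [hc]; ring
    rw [Submodule.mem_bot, Submodule.Quotient.mk_eq_zero]
    exact Ideal.mem_span_singleton.mpr ⟨c, hy⟩
  · intro z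
    obtain ⟨y, rfl⟩ := Submodule.Quotient.mk_surjective _ z
    exact ⟨Submodule.Quotient.mk y, by rw [Submodule.mapQ_apply]; rfl⟩
  · ext z
    simp only [LinearMap.mem_range, LinearMap.mem_ker]
    constructor
    · rintro ⟨w, rfl⟩
      obtain ⟨y, rfl⟩ := Submodule.Quotient.mk_surjective _ w
      rw [Submodule.mapQ_apply, Submodule.mapQ_apply]
      simp only [LinearMap.lsmul_apply, smul_eq_mul, LinearMap.id_coe, id_eq]
      rw [Submodule.Quotient.mk_eq_zero]
      exact Ideal.mem_span_singleton.mpr (dvd_mul_right π y)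
    · intro hz
      obtain ⟨y, rfl⟩ := Submodule.Quotient.mk_surjective _ z
      rw [Submodule.mapQ_apply, Submodule.Quotient.mk_eq_zero] at hz
      simp only [LinearMap.id_coe, id_eq] at hz
      obtain ⟨c, rfl⟩ := Ideal.mem_span_singleton.mp hz
      refine ⟨Submodule.Quotient.mk c, by rw [Submodule.mapQ_apply]; simp⟩

/-- A nonzero finitely generated module with no nonzero torsion-free part maps onto `A`. -/
theorem surj_onto_ring (M : Type) [AddCommGroup M] [Module A M] [Module.Finite A M]
    (x : M) (hx : ∀ r : A, r ≠ 0 → r • x ≠ 0) :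
    ∃ p : M →ₗ[A] A, Function.Surjective p := by
  haveI : Module.Finite A (M ⧸ torsion A M) :=
    Module.Finite.of_surjective (torsion A M).mkQ (Submodule.mkQ_surjective _)
  haveI : Module.IsTorsionFree A (M ⧸ torsion A M) :=
    Submodule.QuotientTorsion.instIsTorsionFree
  haveI : Module.Free A (M ⧸ torsion A M) := Module.free_of_finite_type_torsion_free'
  have hx0 : (torsion A M).mkQ x ≠ 0 := by
    rw [Submodule.mkQ_apply, ne_eq, Submodule.Quotient.mk_eq_zero]
    intro hmem
    obtain ⟨r, hr⟩ := hmem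
    exact hx r.1 (nonZeroDivisors.ne_zero r.2) hr
  have b := Module.Free.chooseBasis A (M ⧸ torsion A M)
  have hrx : b.repr ((torsion A M).mkQ x) ≠ 0 := by
    simpa using hx0
  obtain ⟨i, hi⟩ : ∃ i, b.repr ((torsion A M).mkQ x) i ≠ 0 := by
    by_contra h
    push_neg at h
    exact hrx (Finsupp.ext h)
  refine ⟨(Finsupp.lapply i) ∘ₗ (b.repr : (M ⧸ torsion A M) →ₗ[A] _) ∘ₗ (torsion A M).mkQ, ?_⟩
  intro r
  obtain ⟨y, hy⟩ := Submodule.mkQ_surjective (torsion A M) (r • b i)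
  refine ⟨y, ?_⟩
  simp [hy, Module.Basis.repr_self]

variable {T : Set (ModuleCat.{0} A)}

/-- If a torsion class contains a module with a non-torsion element, it contains every
finitely generated module. -/
theorem tc_contains_all
    (hfin : ∀ M ∈ T, Module.Finite A M)
    (hsum : ∀ (n : ℕ) (F : Fin n → ModuleCat.{0} A), (∀ i, F i ∈ T) →
      ModuleCat.of A (DirectSum (Fin n) (fun i => (F i : Type))) ∈ T)
    (hquot : ∀ M N : ModuleCat.{0} A, M ∈ T →
      (∃ p : (M : Type) →ₗ[A] (N : Type), Function.Surjective p) → N ∈ T)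
    (M : ModuleCat.{0} A) (hM : M ∈ T) (x : (M : Type))
    (hx : ∀ r : A, r ≠ 0 → r • x ≠ 0)
    (N : ModuleCat.{0} A) (hN : Module.Finite A (N : Type)) : N ∈ T := by
  haveI := hfin M hM
  have hAT : ModuleCat.of A A ∈ T := hquot M (ModuleCat.of A A) hM (surj_onto_ring _ x hx)
  obtain ⟨n, f, hf⟩ := Module.Finite.exists_fin' A (N : Type)
  have hDS := hsum n (fun _ => ModuleCat.of A A) (fun _ => hAT)
  exact hquot _ N hDS ⟨f ∘ₗ (DirectSum.linearEquivFunOnFintype A (Fin n)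
    (fun _ => A)).toLinearMap, hf.comp (LinearEquiv.surjective _)⟩

/-- powers of the uniformizer: `A ⧸ (π^k)` lies in any torsion class containing `A ⧸ (π)`. -/
theorem tc_quot_pow_mem {π : A} (hπ : Irreducible π)
    (hbase : ModuleCat.of A (A ⧸ Ideal.span {π}) ∈ T)
    (hzero : ModuleCat.of A (A ⧸ Ideal.span {(π : A) ^ 0}) ∈ T)
    (hext : ∀ P B C : ModuleCat.{0} A, P ∈ T → C ∈ T →
      (∃ (f : (P : Type) →ₗ[A] (B : Type)) (g : (B : Type) →ₗ[A] (C : Type)),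
        Function.Injective f ∧ Function.Surjective g ∧ LinearMap.range f = LinearMap.ker g) →
      B ∈ T)
    (k : ℕ) : ModuleCat.of A (A ⧸ Ideal.span {π ^ k}) ∈ T := by
  induction k with
  | zero => exact hzero
  | succ k ih =>
    exact hext (ModuleCat.of A (A ⧸ Ideal.span {π ^ k}))
      (ModuleCat.of A (A ⧸ Ideal.span {π ^ (k+1)}))
      (ModuleCat.of A (A ⧸ Ideal.span {π})) ih hbase (pow_succ_exact π hπ k)

end Classify


section Classify2

open Submodule

variable {A : Type} [CommRing A] [IsDomain A] [IsDiscreteValuationRing A]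

/-- A nonzero finitely generated module surjects onto the residue field `A ⧸ (π)`. -/
theorem surj_onto_simple (M : Type) [AddCommGroup M] [Module A M] [Module.Finite A M]
    (x : M) (hx : x ≠ 0) (π : A) (hπ : Irreducible π) :
    ∃ p : M →ₗ[A] (A ⧸ Ideal.span {π}), Function.Surjective p := by
  haveI : Nontrivial M := nontrivial_of_ne x 0 hx
  haveI : IsCoatomic (Submodule A M) :=
    CompleteLattice.coatomic_of_top_compact ((Submodule.fg_iff_compact _).mp Module.Finite.fg_top)
  rcases IsCoatomic.eq_top_or_exists_le_coatom (⊥ : Submodule A M) with h | ⟨N, hN, -⟩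
  · exfalso
    have hx' : x ∈ (⊤ : Submodule A M) := Submodule.mem_top
    rw [← h] at hx'
    exact hx (Submodule.mem_bot A |>.mp hx')
  · haveI : IsSimpleModule A (M ⧸ N) := isSimpleModule_iff_isCoatom.mpr hN
    obtain ⟨I, hI, ⟨e⟩⟩ := isSimpleModule_iff_quot_maximal.mp this
    have hIm : I = Ideal.span {π} := by
      rw [IsLocalRing.eq_maximalIdeal hI,
        (IsDiscreteValuationRing.irreducible_iff_uniformizer π).mp hπ]
    subst hIm
    exact ⟨e.toLinearMap ∘ₗ N.mkQ, e.surjective.comp (Submodule.mkQ_surjective N)⟩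


end Classify2

section Final

open Submodule

variable {A : Type} [CommRing A] [IsDomain A] [IsDiscreteValuationRing A]
variable {T : Set (ModuleCat.{0} A)}

/-- If a torsion class contains a nonzero module, it contains every finitely generated
torsion module. -/
theorem tc_contains_torsion (hT : IsFGTorsionClass A T)
    (M : ModuleCat.{0} A) (hM : M ∈ T) (x : (M : Type)) (hx : x ≠ 0)
    (N : ModuleCat.{0} A) (hNfin : Module.Finite A (N : Type))
    (hNtors : ∀ y : (N : Type), ∃ r : A, r ≠ 0 ∧ r • y = 0) : N ∈ T := by
  obtain ⟨hfin, hiso, hsum, hquot, hext⟩ := hT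
  obtain ⟨π, hπ⟩ := IsDiscreteValuationRing.exists_irreducible A
  haveI := hfin M hM
  have hbase : ModuleCat.of A (A ⧸ Ideal.span {π}) ∈ T :=
    hquot M (ModuleCat.of A (A ⧸ Ideal.span {π})) hM (surj_onto_simple (M : Type) x hx π hπ)
  have hzero : ModuleCat.of A (A ⧸ Ideal.span {(π : A) ^ 0}) ∈ T := by
    apply zero_mem_tc ⟨hfin, hiso, hsum, hquot, hext⟩
    intro z
    obtain ⟨y, rfl⟩ := Submodule.Quotient.mk_surjective _ z
    rw [Submodule.Quotient.mk_eq_zero]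
    exact Ideal.mem_span_singleton.mpr (by rw [pow_zero]; exact one_dvd y)
  have hpow := tc_quot_pow_mem hπ hbase hzero hext
  haveI := hNfin
  have hNtors' : Module.IsTorsion A (N : Type) := fun y => by
    obtain ⟨r, hr, h⟩ := hNtors y
    exact ⟨⟨r, mem_nonZeroDivisors_of_ne_zero hr⟩, h⟩
  obtain ⟨ι, hι, p, hp, e, ⟨l⟩⟩ := Module.equiv_directSum_of_isTorsion (M := (N : Type)) hNtors'
  haveI := hι
  let n := Fintype.card ι
  let σ : Fin n ≃ ι := (Fintype.equivFin ι).symm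
  let F : Fin n → ModuleCat.{0} A :=
    fun j => ModuleCat.of A (A ⧸ Ideal.span {p (σ j) ^ e (σ j)})
  have hFmem : ∀ j, F j ∈ T := by
    intro j
    have hsp : Ideal.span {p (σ j) ^ e (σ j)} = Ideal.span {π ^ e (σ j)} :=
      Ideal.span_singleton_eq_span_singleton.mpr
        ((IsDiscreteValuationRing.associated_of_irreducible A (hp _) hπ).pow_pow)
    show ModuleCat.of A (A ⧸ Ideal.span {p (σ j) ^ e (σ j)}) ∈ T
    rw [hsp]
    exact hpow (e (σ j))
  have hDS := hsum n F hFmem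
  refine hiso _ N ⟨?_⟩ hDS
  exact (l.trans (DirectSum.lequivCongrLeft A σ.symm)).symm

/-- the classification of torsion classes over a DVR -/
theorem tc_classify (T : Set (ModuleCat.{0} A)) (hT : IsFGTorsionClass A T) :
    T = {M : ModuleCat.{0} A | ∀ x : M, x = 0} ∨
    T = {M : ModuleCat.{0} A | Module.Finite A M} ∨
    T = {M : ModuleCat.{0} A | Module.Finite A M ∧
          ∀ x : M, ∃ r : A, r ≠ 0 ∧ r • x = 0} := by
  by_cases h1 : ∃ M ∈ T, ∃ x : (M : Type), ∀ r : A, r ≠ 0 → r • x ≠ 0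
  · right; left
    obtain ⟨M, hM, x, hx⟩ := h1
    ext N
    exact ⟨fun hN => hT.1 N hN,
      fun hN => tc_contains_all hT.1 hT.2.2.1 hT.2.2.2.1 M hM x hx N hN⟩
  · push_neg at h1
    by_cases h2 : ∃ M ∈ T, ∃ x : (M : Type), x ≠ 0
    · right; right
      obtain ⟨M, hM, x, hx⟩ := h2
      ext N
      constructor
      · intro hN
        exact ⟨hT.1 N hN, h1 N hN⟩
      · rintro ⟨hNfin, hNtors⟩
        exact tc_contains_torsion hT M hM x hx N hNfin hNtors
    · left
      push_neg at h2
      ext N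
      exact ⟨fun hN => h2 N hN, fun hN => zero_mem_tc hT hN⟩

end Final

end FGTCAux

set_option maxHeartbeats 1000000 in
set_option synthInstance.maxHeartbeats 400000 in
open FGTCAux in
/-- Over the localisation `R` of `ℤ` at the prime `(2)` (realised as the subring of `ℚ` of
fractions with odd denominator), the only torsion classes of finitely generated modules
are `{0}`, all finitely generated modules, and the finitely generated torsion modules. -/
theorem fg_torsion_classes_of_Z_localised_at_two
    (R : Subring ℚ) (hR : ∀ x : ℚ, x ∈ R ↔ ∃ a b : ℤ, Odd b ∧ x = (a : ℚ) / (b : ℚ)) :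
    (IsFGTorsionClass ↥R {M : ModuleCat.{0} ↥R | ∀ x : M, x = 0} ∧
      IsFGTorsionClass ↥R {M : ModuleCat.{0} ↥R | Module.Finite ↥R M} ∧
      IsFGTorsionClass ↥R
        {M : ModuleCat.{0} ↥R | Module.Finite ↥R M ∧
          ∀ x : M, ∃ r : ↥R, r ≠ 0 ∧ r • x = 0}) ∧
    ({M : ModuleCat.{0} ↥R | ∀ x : M, x = 0} ≠
        {M : ModuleCat.{0} ↥R | Module.Finite ↥R M} ∧
      {M : ModuleCat.{0} ↥R | ∀ x : M, x = 0} ≠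
        {M : ModuleCat.{0} ↥R | Module.Finite ↥R M ∧
          ∀ x : M, ∃ r : ↥R, r ≠ 0 ∧ r • x = 0} ∧
      {M : ModuleCat.{0} ↥R | Module.Finite ↥R M} ≠
        {M : ModuleCat.{0} ↥R | Module.Finite ↥R M ∧
          ∀ x : M, ∃ r : ↥R, r ≠ 0 ∧ r • x = 0}) ∧
    (∀ T : Set (ModuleCat.{0} ↥R), IsFGTorsionClass ↥R T →
      T = {M : ModuleCat.{0} ↥R | ∀ x : M, x = 0} ∨
      T = {M : ModuleCat.{0} ↥R | Module.Finite ↥R M} ∨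
      T = {M : ModuleCat.{0} ↥R | Module.Finite ↥R M ∧
            ∀ x : M, ∃ r : ↥R, r ≠ 0 ∧ r • x = 0}) := by
  haveI : IsDiscreteValuationRing ↥R := dvr hR
  refine ⟨⟨tc_zero, tc_all, tc_torsion⟩, ⟨?_, ?_, ?_⟩, tc_classify⟩
  · -- {0} ≠ all f.g. modules
    intro h
    have hmem : ModuleCat.of ↥R ↥R ∈ {M : ModuleCat.{0} ↥R | Module.Finite ↥R M} :=
      Module.Finite.self ↥R
    rw [← h] at hmem
    have hsub : ∀ x : ↥R, x = 0 := fun x => hmem x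
    exact one_ne_zero (hsub 1)
  · -- {0} ≠ torsion modules
    intro h
    have hmem : ModuleCat.of ↥R (↥R ⧸ Ideal.span {(2 : ↥R)}) ∈
        {M : ModuleCat.{0} ↥R | Module.Finite ↥R M ∧
          ∀ x : M, ∃ r : ↥R, r ≠ 0 ∧ r • x = 0} := by
      refine ⟨Module.Finite.of_surjective (Ideal.span {(2 : ↥R)}).mkQ
        (Submodule.mkQ_surjective _), ?_⟩
      intro y
      obtain ⟨z, rfl⟩ := Submodule.Quotient.mk_surjective _ y
      refine ⟨2, r_two_ne_zero, ?_⟩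
      rw [← Submodule.Quotient.mk_smul, Submodule.Quotient.mk_eq_zero]
      exact Ideal.mem_span_singleton.mpr ⟨z, by rw [smul_eq_mul]⟩
    rw [← h] at hmem
    have hmk : ∀ z : (↥R ⧸ Ideal.span {(2 : ↥R)}), z = 0 := fun z => hmem z
    have h1 := hmk (Submodule.Quotient.mk (1 : ↥R))
    rw [Submodule.Quotient.mk_eq_zero] at h1
    exact (two_irreducible hR).not_isUnit (isUnit_of_dvd_one (Ideal.mem_span_singleton.mp h1))
  · -- all ≠ torsion
    intro h
    have hmem : ModuleCat.of ↥R ↥R ∈ {M : ModuleCat.{0} ↥R | Module.Finite ↥R M} :=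
      Module.Finite.self ↥R
    rw [h] at hmem
    have htors : ∀ x : ↥R, ∃ r : ↥R, r ≠ 0 ∧ r • x = 0 := fun x => hmem.2 x
    obtain ⟨r, hr, hrx⟩ := htors 1
    exact hr (by rwa [smul_eq_mul, mul_one] at hrx)
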